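/- (Generalized Mean Value Theorem) Let f be continuous on [a,b], and suppose f and the function t ↦ t − a are p-differentiable on (a,b), where p satisfies the monotonicity condition: for small |h|, p(t,h) > t when h > 0 and p(t,h) < t when h < 0. Then there is c ∈ (a,b) with D_p f(c) = ((f(b) − f(a))/(b − a)) · k, where k = D_p(t ↦ t − a)(c). -/

import Mathlib

open Filter Set Topology

/-- Generalized Mean Value Theorem: if `f` is continuous on `[a,b]` and both
`f` and `t ↦ t - a` are p-differentiable on `(a,b)` (with p-derivatives `Df`
and `Dg` resp.), and `p` satisfies the monotonicity condition, then there is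
`c ∈ (a,b)` with `D_p f(c) = ((f b - f a)/(b - a)) · k`, `k = D_p(· - a)(c)`. -/
theorem pDeriv_mvt (a b : ℝ) (hab : a < b) (f : ℝ → ℝ) (p : ℝ → ℝ → ℝ)
    (Df Dg : ℝ → ℝ)
    (hfc : ContinuousOn f (Set.Icc a b))
    (hDf : ∀ t ∈ Set.Ioo a b,
      Tendsto (fun h : ℝ => (f (p t h) - f t) / h) (𝓝[≠] (0:ℝ)) (𝓝 (Df t)))
    (hDg : ∀ t ∈ Set.Ioo a b,
      Tendsto (fun h : ℝ => ((p t h - a) - (t - a)) / h) (𝓝[≠] (0:ℝ)) (𝓝 (Dg t)))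
    (hp : ∀ t ∈ Set.Ioo a b, ∀ᶠ h in 𝓝 (0:ℝ),
      (0 < h → t < p t h) ∧ (h < 0 → p t h < t)) :
    ∃ c ∈ Set.Ioo a b, Df c = ((f b - f a) / (b - a)) * Dg c := by
  set m : ℝ := (f b - f a) / (b - a) with hm
  set φ : ℝ → ℝ := fun t => f t - m * (t - a) with hφ
  have hba : (b - a) ≠ 0 := sub_ne_zero.mpr hab.ne'
  have hφc : ContinuousOn φ (Set.Icc a b) :=
    hfc.sub ((continuous_const.mul (continuous_id.sub continuous_const)).continuousOn)
  have hφab : φ b = φ a := by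
    simp only [hφ, hm]
    field_simp
    ring
  -- key: at an interior extremum, Df c = m * Dg c
  have key : ∀ c ∈ Set.Ioo a b,
      ((∀ x ∈ Set.Icc a b, φ x ≤ φ c) ∨ (∀ x ∈ Set.Icc a b, φ c ≤ φ x)) →
      Df c = m * Dg c := by
    intro c hc hext
    have hDφ : Tendsto (fun h => (φ (p c h) - φ c) / h) (𝓝[≠] (0:ℝ))
        (𝓝 (Df c - m * Dg c)) := by
      have := (hDf c hc).sub ((hDg c hc).const_mul m)
      refine this.congr (fun h => ?_)
      simp only [hφ]
      ring
    have hpc : Tendsto (fun h => p c h) (𝓝[≠] (0:ℝ)) (𝓝 c) := by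
      have h0 : Tendsto (fun h : ℝ => h) (𝓝[≠] (0:ℝ)) (𝓝 0) :=
        tendsto_id.mono_left nhdsWithin_le_nhds
      have h1 : Tendsto (fun h => (((p c h - a) - (c - a)) / h) * h + c)
          (𝓝[≠] (0:ℝ)) (𝓝 (Dg c * 0 + c)) :=
        ((hDg c hc).mul h0).add_const c
      rw [mul_zero, zero_add] at h1
      refine h1.congr' ?_
      filter_upwards [self_mem_nhdsWithin] with h (hh : h ≠ 0)
      field_simp
      ring
    have hmem : ∀ᶠ h in 𝓝[≠] (0:ℝ), p c h ∈ Set.Icc a b := by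
      filter_upwards [hpc.eventually_mem (isOpen_Ioo.mem_nhds hc)] with h hh
        using Set.Ioo_subset_Icc_self hh
    have hle : 𝓝[>] (0:ℝ) ≤ 𝓝[≠] (0:ℝ) :=
      nhdsWithin_mono _ (fun x hx => ne_of_gt hx)
    have hle' : 𝓝[<] (0:ℝ) ≤ 𝓝[≠] (0:ℝ) :=
      nhdsWithin_mono _ (fun x hx => ne_of_lt hx)
    have hzero : Df c - m * Dg c = 0 := by
      rcases hext with hmax | hmin
      · have h1 : Df c - m * Dg c ≤ 0 := by
          refine le_of_tendsto (hDφ.mono_left hle) ?_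
          filter_upwards [hle hmem, self_mem_nhdsWithin] with h hh (hpos : h ∈ Set.Ioi 0)
          exact div_nonpos_of_nonpos_of_nonneg (sub_nonpos.mpr (hmax _ hh)) (le_of_lt hpos)
        have h2 : 0 ≤ Df c - m * Dg c := by
          refine ge_of_tendsto (hDφ.mono_left hle') ?_
          filter_upwards [hle' hmem, self_mem_nhdsWithin] with h hh (hneg : h ∈ Set.Iio 0)
          exact div_nonneg_iff.mpr (Or.inr ⟨sub_nonpos.mpr (hmax _ hh), le_of_lt hneg⟩)
        linarith
      · have h1 : 0 ≤ Df c - m * Dg c := by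
          refine ge_of_tendsto (hDφ.mono_left hle) ?_
          filter_upwards [hle hmem, self_mem_nhdsWithin] with h hh (hpos : h ∈ Set.Ioi 0)
          exact div_nonneg (sub_nonneg.mpr (hmin _ hh)) (le_of_lt hpos)
        have h2 : Df c - m * Dg c ≤ 0 := by
          refine le_of_tendsto (hDφ.mono_left hle') ?_
          filter_upwards [hle' hmem, self_mem_nhdsWithin] with h hh (hneg : h ∈ Set.Iio 0)
          exact div_nonpos_of_nonneg_of_nonpos (sub_nonneg.mpr (hmin _ hh)) (le_of_lt hneg)
        linarith
    linarith
  have hne : (Set.Icc a b).Nonempty := Set.nonempty_Icc.mpr hab.le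
  obtain ⟨c1, hc1, hc1max⟩ := isCompact_Icc.exists_isMaxOn hne hφc
  obtain ⟨c2, hc2, hc2min⟩ := isCompact_Icc.exists_isMinOn hne hφc
  have haI : a ∈ Set.Icc a b := Set.left_mem_Icc.mpr hab.le
  by_cases h1 : φ c1 = φ a
  · by_cases h2 : φ c2 = φ a
    · -- φ constant; take midpoint
      have hmid : (a + b) / 2 ∈ Set.Ioo a b := ⟨by linarith, by linarith⟩
      refine ⟨(a + b) / 2, hmid, ?_⟩
      have hmidI := Set.Ioo_subset_Icc_self hmid
      have hmax : ∀ x ∈ Set.Icc a b, φ x ≤ φ ((a+b)/2) := by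
        intro x hx
        have ha1 : φ x ≤ φ c1 := hc1max hx
        have ha2 : φ c2 ≤ φ ((a+b)/2) := hc2min hmidI
        rw [h1] at ha1; rw [h2] at ha2
        exact ha1.trans ha2
      exact key _ hmid (Or.inl hmax)
    · -- min is interior
      have hc2a : c2 ≠ a := fun h => h2 (by rw [h])
      have hc2b : c2 ≠ b := fun h => h2 (by rw [h, hφab])
      have hc2' : c2 ∈ Set.Ioo a b :=
        ⟨lt_of_le_of_ne hc2.1 (Ne.symm hc2a), lt_of_le_of_ne hc2.2 hc2b⟩
      exact ⟨c2, hc2', key _ hc2' (Or.inr (fun x hx => hc2min hx))⟩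
  · -- max is interior
    have hc1a : c1 ≠ a := fun h => h1 (by rw [h])
    have hc1b : c1 ≠ b := fun h => h1 (by rw [h, hφab])
    have hc1' : c1 ∈ Set.Ioo a b :=
      ⟨lt_of_le_of_ne hc1.1 (Ne.symm hc1a), lt_of_le_of_ne hc1.2 hc1b⟩
    exact ⟨c1, hc1', key _ hc1' (Or.inl (fun x hx => hc1max hx))⟩
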